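/- If S ⊆ {0,1}^X is shattering-extremal then every restriction of S to a subcube C ⊆ {0,1}^X (normalized to a system on dim(C)) is shattering-extremal. -/
import Mathlib


open Finset

variable {α : Type*} [Fintype α] [DecidableEq α]

/-- `S` shatters `Y`: every assignment on `Y` extends to a member of `S`. -/
def shatters (S : Finset (α → Bool)) (Y : Finset α) : Prop :=
  ∀ f : α → Bool, ∃ s ∈ S, ∀ a ∈ Y, s a = f a

/-- `S` strongly shatters `Y`: some assignment off `Y` has all its `Y`-extensions in `S`. -/
def stronglyShatters (S : Finset (α → Bool)) (Y : Finset α) : Prop :=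
  ∃ g : α → Bool, ∀ f : α → Bool, (fun a => if a ∈ Y then f a else g a) ∈ S

open Classical in
/-- The family of shattered subsets. -/
noncomputable def strF (S : Finset (α → Bool)) : Finset (Finset α) :=
  Finset.univ.filter (fun Y => shatters S Y)

open Classical in
/-- The family of strongly shattered subsets. -/
noncomputable def sstrF (S : Finset (α → Bool)) : Finset (Finset α) :=
  Finset.univ.filter (fun Y => stronglyShatters S Y)

/-- Shattering-extremal: shattered = strongly shattered. -/
def SE (S : Finset (α → Bool)) : Prop :=
  ∀ Y : Finset α, shatters S Y ↔ stronglyShatters S Y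

lemma mem_strF {S : Finset (α → Bool)} {Y : Finset α} : Y ∈ strF S ↔ shatters S Y := by
  classical
  simp [strF]

lemma mem_sstrF {S : Finset (α → Bool)} {Y : Finset α} :
    Y ∈ sstrF S ↔ stronglyShatters S Y := by
  classical
  simp [sstrF]

lemma shatters_of_strong {S : Finset (α → Bool)} {Y : Finset α}
    (h : stronglyShatters S Y) : shatters S Y := by
  obtain ⟨g, hg⟩ := h
  intro f
  exact ⟨_, hg f, fun a ha => by simp [ha]⟩

lemma shatters_mono {S S' : Finset (α → Bool)} {Y : Finset α} (hS : S ⊆ S')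
    (h : shatters S Y) : shatters S' Y := by
  intro f
  obtain ⟨s, hs, ha⟩ := h f
  exact ⟨s, hS hs, ha⟩

lemma notMem_of_shatters_filter {S : Finset (α → Bool)} {i : α} {b : Bool} {Z : Finset α}
    (h : shatters (S.filter fun f => f i = b) Z) : i ∉ Z := by
  classical
  intro hi
  obtain ⟨s, hs, ha⟩ := h fun _ => !b
  have h1 : s i = b := (Finset.mem_filter.mp hs).2
  have h2 : s i = !b := ha i hi
  rw [h1] at h2
  simp at h2

lemma strong_filter {S : Finset (α → Bool)} {i : α} {Z : Finset α} (hi : i ∉ Z)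
    {g : α → Bool} (hg : ∀ f : α → Bool, (fun a => if a ∈ Z then f a else g a) ∈ S) :
    stronglyShatters (S.filter fun f => f i = g i) Z := by
  classical
  refine ⟨g, fun f => Finset.mem_filter.mpr ⟨hg f, by simp [hi]⟩⟩

lemma strong_filter_erase {S : Finset (α → Bool)} {i : α} {Z : Finset α} (hi : i ∈ Z) (b : Bool)
    (hZ : stronglyShatters S Z) :
    stronglyShatters (S.filter fun f => f i = b) (Z.erase i) := by
  classical
  obtain ⟨g, hg⟩ := hZ
  refine ⟨fun a => if a = i then b else g a, fun f => ?_⟩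
  have key : (fun a => if a ∈ Z.erase i then f a else if a = i then b else g a)
      = (fun a => if a ∈ Z then (if a = i then b else f a) else g a) := by
    funext a
    by_cases hai : a = i
    · subst hai
      simp [hi]
    · by_cases haZ : a ∈ Z
      · simp [hai, haZ]
      · have : a ∉ Z.erase i := fun hc => haZ (Finset.mem_of_mem_erase hc)
        simp [hai, haZ, this]
  refine Finset.mem_filter.mpr ⟨?_, ?_⟩
  · rw [key]
    exact hg _
  · simp

lemma shatters_insert' {S : Finset (α → Bool)} {i : α} {Z : Finset α}
    (h : ∀ b, shatters (S.filter fun f => f i = b) Z) : shatters S (insert i Z) := by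
  classical
  intro f
  obtain ⟨s, hs, ha⟩ := h (f i) f
  obtain ⟨hsS, hsi⟩ := Finset.mem_filter.mp hs
  refine ⟨s, hsS, fun a haZ => ?_⟩
  rcases Finset.mem_insert.mp haZ with rfl | haZ
  · exact hsi
  · exact ha a haZ

/-- Core lemma: a half (hyperplane section) of a shattering-extremal system is extremal. -/
lemma SE_filter (S : Finset (α → Bool)) (i : α) (b : Bool) (h : SE S) :
    SE (S.filter fun f => f i = b) := by
  classical
  -- equality of the two families for S
  have hstr_eq : strF S = sstrF S := by
    ext Z
    rw [mem_strF, mem_sstrF]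
    exact h Z
  -- card sstrF S ≤ card sstrF S₀ + card sstrF S₁
  have hpart1 : ((sstrF S).filter fun Z => i ∈ Z).card
      + ((sstrF S).filter fun Z => ¬ i ∈ Z).card = (sstrF S).card :=
    Finset.card_filter_add_card_filter_not _
  have h1 : (sstrF S).filter (fun Z => ¬ i ∈ Z)
      ⊆ sstrF (S.filter fun f => f i = false) ∪ sstrF (S.filter fun f => f i = true) := by
    intro Z hZ
    obtain ⟨hZs, hiZ⟩ := Finset.mem_filter.mp hZ
    obtain ⟨g, hg⟩ := mem_sstrF.mp hZs
    have hst := strong_filter hiZ hg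
    cases hgi : g i
    · rw [hgi] at hst
      exact Finset.mem_union_left _ (mem_sstrF.mpr hst)
    · rw [hgi] at hst
      exact Finset.mem_union_right _ (mem_sstrF.mpr hst)
  have h2 : ((sstrF S).filter fun Z => i ∈ Z).card
      ≤ (sstrF (S.filter fun f => f i = false) ∩ sstrF (S.filter fun f => f i = true)).card := by
    apply Finset.card_le_card_of_injOn (fun Z => Z.erase i)
    · intro Z hZ
      obtain ⟨hZs, hiZ⟩ := Finset.mem_filter.mp hZ
      have hst := mem_sstrF.mp hZs
      exact Finset.mem_inter.mpr
        ⟨mem_sstrF.mpr (strong_filter_erase hiZ false hst),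
         mem_sstrF.mpr (strong_filter_erase hiZ true hst)⟩
    · intro Z hZ W hW hEW
      have hiZ : i ∈ Z := (Finset.mem_filter.mp hZ).2
      have hiW : i ∈ W := (Finset.mem_filter.mp hW).2
      have := congrArg (insert i) hEW
      rwa [Finset.insert_erase hiZ, Finset.insert_erase hiW] at this
  have card1 : (sstrF S).card ≤ (sstrF (S.filter fun f => f i = false)).card
      + (sstrF (S.filter fun f => f i = true)).card := by
    have hu := Finset.card_le_card h1
    have hui : (sstrF (S.filter fun f => f i = false)
        ∪ sstrF (S.filter fun f => f i = true)).card
        + (sstrF (S.filter fun f => f i = false)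
        ∩ sstrF (S.filter fun f => f i = true)).card
        = (sstrF (S.filter fun f => f i = false)).card
        + (sstrF (S.filter fun f => f i = true)).card :=
      Finset.card_union_add_card_inter _ _
    linarith
  -- card strF S₀ + card strF S₁ ≤ card strF S
  have hpart2 : ((strF S).filter fun Z => i ∈ Z).card
      + ((strF S).filter fun Z => ¬ i ∈ Z).card = (strF S).card :=
    Finset.card_filter_add_card_filter_not _
  have h3 : strF (S.filter fun f => f i = false) ∪ strF (S.filter fun f => f i = true)
      ⊆ (strF S).filter fun Z => ¬ i ∈ Z := by
    intro Z hZ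
    rcases Finset.mem_union.mp hZ with hZ' | hZ'
    · have hsh := mem_strF.mp hZ'
      exact Finset.mem_filter.mpr
        ⟨mem_strF.mpr (shatters_mono (Finset.filter_subset _ _) hsh),
         notMem_of_shatters_filter hsh⟩
    · have hsh := mem_strF.mp hZ'
      exact Finset.mem_filter.mpr
        ⟨mem_strF.mpr (shatters_mono (Finset.filter_subset _ _) hsh),
         notMem_of_shatters_filter hsh⟩
  have h4 : (strF (S.filter fun f => f i = false) ∩ strF (S.filter fun f => f i = true)).card
      ≤ ((strF S).filter fun Z => i ∈ Z).card := by
    apply Finset.card_le_card_of_injOn (fun Z => insert i Z)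
    · intro Z hZ
      obtain ⟨hZ0, hZ1⟩ := Finset.mem_inter.mp hZ
      have hsh : shatters S (insert i Z) := by
        apply shatters_insert'
        intro c
        cases c
        · exact mem_strF.mp hZ0
        · exact mem_strF.mp hZ1
      exact Finset.mem_filter.mpr ⟨mem_strF.mpr hsh, Finset.mem_insert_self _ _⟩
    · intro Z hZ W hW hEW
      have hiZ : i ∉ Z := notMem_of_shatters_filter (mem_strF.mp (Finset.mem_inter.mp hZ).1)
      have hiW : i ∉ W := notMem_of_shatters_filter (mem_strF.mp (Finset.mem_inter.mp hW).1)
      have := congrArg (fun T => Finset.erase T i) hEW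
      simpa [Finset.erase_insert hiZ, Finset.erase_insert hiW] using this
  have card2 : (strF (S.filter fun f => f i = false)).card
      + (strF (S.filter fun f => f i = true)).card ≤ (strF S).card := by
    have hu := Finset.card_le_card h3
    have hui : (strF (S.filter fun f => f i = false)
        ∪ strF (S.filter fun f => f i = true)).card
        + (strF (S.filter fun f => f i = false)
        ∩ strF (S.filter fun f => f i = true)).card
        = (strF (S.filter fun f => f i = false)).card
        + (strF (S.filter fun f => f i = true)).card :=
      Finset.card_union_add_card_inter _ _
    linarith
  -- combine
  have sub0 : sstrF (S.filter fun f => f i = false) ⊆ strF (S.filter fun f => f i = false) :=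
    fun Z hZ => mem_strF.mpr (shatters_of_strong (mem_sstrF.mp hZ))
  have sub1 : sstrF (S.filter fun f => f i = true) ⊆ strF (S.filter fun f => f i = true) :=
    fun Z hZ => mem_strF.mpr (shatters_of_strong (mem_sstrF.mp hZ))
  have hc0 := Finset.card_le_card sub0
  have hc1 := Finset.card_le_card sub1
  have hSE : (strF S).card = (sstrF S).card := by rw [hstr_eq]
  have hEq0 : sstrF (S.filter fun f => f i = false) = strF (S.filter fun f => f i = false) :=
    Finset.eq_of_subset_of_card_le sub0 (by linarith)
  have hEq1 : sstrF (S.filter fun f => f i = true) = strF (S.filter fun f => f i = true) :=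
    Finset.eq_of_subset_of_card_le sub1 (by linarith)
  cases b
  · intro Z
    constructor
    · intro hs
      have : Z ∈ strF (S.filter fun f => f i = false) := mem_strF.mpr hs
      rw [← hEq0] at this
      exact mem_sstrF.mp this
    · exact shatters_of_strong
  · intro Z
    constructor
    · intro hs
      have : Z ∈ strF (S.filter fun f => f i = true) := mem_strF.mpr hs
      rw [← hEq1] at this
      exact mem_sstrF.mp this
    · exact shatters_of_strong

theorem stmt11 (S : Finset (α → Bool)) (Y : Finset α) (g : α → Bool) (h : SE S) :
    SE (S.filter fun f => ∀ a ∉ Y, f a = g a) := by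
  classical
  suffices H : ∀ (n : ℕ) (Y : Finset α), (Finset.univ \ Y).card ≤ n →
      SE (S.filter fun f => ∀ a ∉ Y, f a = g a) from H _ Y le_rfl
  intro n
  induction n with
  | zero =>
    intro Y hY
    have hYuniv : Y = Finset.univ := by
      have hempty : Finset.univ \ Y = ∅ :=
        Finset.card_eq_zero.mp (Nat.le_antisymm hY (Nat.zero_le _))
      exact Finset.univ_subset_iff.mp (Finset.sdiff_eq_empty_iff_subset.mp hempty)
    subst hYuniv
    have : S.filter (fun f => ∀ a ∉ (Finset.univ : Finset α), f a = g a) = S :=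
      Finset.filter_true_of_mem (fun f _ => fun a ha => absurd (Finset.mem_univ a) ha)
    rw [this]
    exact h
  | succ n ih =>
    intro Y hY
    by_cases hYu : Y = Finset.univ
    · subst hYu
      have : S.filter (fun f => ∀ a ∉ (Finset.univ : Finset α), f a = g a) = S :=
        Finset.filter_true_of_mem (fun f _ => fun a ha => absurd (Finset.mem_univ a) ha)
      rw [this]
      exact h
    · obtain ⟨i, hiY⟩ : ∃ i, i ∉ Y := by
        by_contra hc
        push_neg at hc
        exact hYu (Finset.eq_univ_iff_forall.mpr hc)
      have hfilter : (S.filter fun f => ∀ a ∉ Y, f a = g a)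
          = ((S.filter fun f => ∀ a ∉ insert i Y, f a = g a).filter fun f => f i = g i) := by
        ext f
        simp only [Finset.mem_filter]
        constructor
        · rintro ⟨hfS, hf⟩
          exact ⟨⟨hfS, fun a ha => hf a (fun h' => ha (Finset.mem_insert_of_mem h'))⟩, hf i hiY⟩
        · rintro ⟨⟨hfS, hf⟩, hfi⟩
          refine ⟨hfS, fun a ha => ?_⟩
          by_cases hai : a = i
          · subst hai; exact hfi
          · refine hf a (fun h' => ?_)
            rcases Finset.mem_insert.mp h' with h'' | h''
            · exact hai h''
            · exact ha h''
      rw [hfilter]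
      apply SE_filter
      apply ih
      have hi_mem : i ∈ Finset.univ \ Y := Finset.mem_sdiff.mpr ⟨Finset.mem_univ i, hiY⟩
      have hsd : Finset.univ \ insert i Y = (Finset.univ \ Y).erase i := by
        ext a
        simp only [Finset.mem_sdiff, Finset.mem_erase, Finset.mem_insert, Finset.mem_univ,
          true_and]
        tauto
      rw [hsd, Finset.card_erase_of_mem hi_mem]
      omega
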